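/- Let ζ, ζ', and υ be nonempty finite types, h : ζ → ζ' a function, p a pmf on ζ × υ (the joint law of a pair (Z, Y)), and for each z' ∈ ζ' let q(·|z') be a pmf on υ such that q(y|h(z)) > 0 whenever p(z, y) > 0. Let p' be the pushforward pmf on ζ' × υ defined by p'(z', y) = ∑_{z : h(z) = z'} p(z, y), i.e., the joint law of (h(Z), Y). Then the conditional entropy computed from p' satisfies H(Y | h(Z)) ≤ -∑_{(z,y) : p(z,y) > 0} p(z, y) · log q(y | h(z)). (Proposition 1(ii): taking h(z) = a ∘ z, the coordinatewise masking of z by a fixed binary vector a, this gives H(Y_t | A_t ∘ Z_t) ≤ E_{P_{Z_t|A_t}}[H(P_{Y_t|A_t∘Z_t}, Q_{Y_t|A_t∘Z_t})].) -/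
import Mathlib


/-- Proposition 1(ii): variational upper bound on the conditional entropy of `Y`
given a function `h` of `Z`. With `p` the joint law of `(Z, Y)` and `p'` the
pushforward joint law of `(h(Z), Y)`, the conditional entropy `H(Y | h(Z))`
(computed from `p'`) is bounded above by the expected conditional cross-entropy
of any variational family `q (·|z')` that is positive wherever required. -/
theorem conditional_entropy_pushforward_le_cross_entropy
    {ζ ζ' υ : Type*} [Fintype ζ] [Fintype ζ'] [Fintype υ]
    [Nonempty ζ] [Nonempty ζ'] [Nonempty υ] [DecidableEq ζ']
    (h : ζ → ζ')
    (p : ζ × υ → ℝ) (hp0 : ∀ a, 0 ≤ p a) (hp1 : ∑ a, p a = 1)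
    (q : ζ' → υ → ℝ) (hq0 : ∀ z' y, 0 ≤ q z' y) (hq1 : ∀ z', ∑ y, q z' y = 1)
    (hqpos : ∀ z y, 0 < p (z, y) → 0 < q (h z) y)
    (p' : ζ' × υ → ℝ)
    (hp' : ∀ w : ζ' × υ,
      p' w = ∑ z ∈ Finset.univ.filter (fun z : ζ => h z = w.1), p (z, w.2)) :
    -∑ w ∈ Finset.univ.filter (fun w : ζ' × υ => 0 < p' w),
        p' w * Real.log (p' w / ∑ y', p' (w.1, y'))
      ≤ -∑ zy ∈ Finset.univ.filter (fun zy : ζ × υ => 0 < p zy),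
          p zy * Real.log (q (h zy.1) zy.2) := by
  classical
  set pZ : ζ' → ℝ := fun z' => ∑ y', p' (z', y') with hpZdef
  have hp'0 : ∀ w, 0 ≤ p' w := by
    intro w; rw [hp']; exact Finset.sum_nonneg fun z _ => hp0 _
  have hpZ0 : ∀ z', 0 ≤ pZ z' := fun z' => Finset.sum_nonneg fun y _ => hp'0 _
  have hqw : ∀ w : ζ' × υ, 0 < p' w → 0 < q w.1 w.2 := by
    intro w hw
    rw [hp' w] at hw
    have h0 : ∑ z ∈ Finset.univ.filter (fun z : ζ => h z = w.1), (0:ℝ)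
        < ∑ z ∈ Finset.univ.filter (fun z : ζ => h z = w.1), p (z, w.2) := by
      simpa using hw
    obtain ⟨z, hz, hzp⟩ := Finset.exists_lt_of_sum_lt h0
    have hz1 : h z = w.1 := (Finset.mem_filter.mp hz).2
    have := hqpos z w.2 hzp
    rwa [hz1] at this
  have hpZpos : ∀ w : ζ' × υ, 0 < p' w → 0 < pZ w.1 := by
    intro w hw
    refine lt_of_lt_of_le hw ?_
    have : p' (w.1, w.2) ≤ ∑ y', p' (w.1, y') :=
      Finset.single_le_sum (fun y _ => hp'0 _) (Finset.mem_univ w.2)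
    simpa using this
  -- extend filtered sums to full sums
  have hL : ∑ w ∈ Finset.univ.filter (fun w : ζ' × υ => 0 < p' w),
      p' w * Real.log (p' w / pZ w.1) = ∑ w, p' w * Real.log (p' w / pZ w.1) := by
    apply Finset.sum_filter_of_ne
    intro w _ hne
    by_contra hcon
    have hz : p' w = 0 := le_antisymm (not_lt.mp hcon) (hp'0 w)
    simp [hz] at hne
  have hR : ∑ zy ∈ Finset.univ.filter (fun zy : ζ × υ => 0 < p zy),
      p zy * Real.log (q (h zy.1) zy.2) = ∑ zy, p zy * Real.log (q (h zy.1) zy.2) := by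
    apply Finset.sum_filter_of_ne
    intro zy _ hne
    by_contra hcon
    have hz : p zy = 0 := le_antisymm (not_lt.mp hcon) (hp0 zy)
    simp [hz] at hne
  -- rewrite RHS sum as sum over pushforward
  have hRtrans : ∑ zy : ζ × υ, p zy * Real.log (q (h zy.1) zy.2)
      = ∑ w : ζ' × υ, p' w * Real.log (q w.1 w.2) := by
    rw [Fintype.sum_prod_type, Fintype.sum_prod_type]
    rw [← Finset.sum_fiberwise Finset.univ h
      (fun z => ∑ y, p (z, y) * Real.log (q (h z) y))]
    refine Finset.sum_congr rfl fun z' _ => ?_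
    have step1 : ∑ z ∈ Finset.univ.filter (fun z => h z = z'),
        ∑ y, p (z, y) * Real.log (q (h z) y)
        = ∑ z ∈ Finset.univ.filter (fun z => h z = z'),
          ∑ y, p (z, y) * Real.log (q z' y) :=
      Finset.sum_congr rfl fun z hz => by rw [(Finset.mem_filter.mp hz).2]
    rw [step1, Finset.sum_comm]
    refine Finset.sum_congr rfl fun y _ => ?_
    rw [hp' (z', y), Finset.sum_mul]
  -- total masses
  have hmass1 : ∑ w : ζ' × υ, p' w = 1 := by
    rw [Fintype.sum_prod_type]
    rw [← hp1, Fintype.sum_prod_type]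
    rw [← Finset.sum_fiberwise Finset.univ h (fun z => ∑ y, p (z, y))]
    refine Finset.sum_congr rfl fun z' _ => ?_
    rw [Finset.sum_comm]
    exact Finset.sum_congr rfl fun y _ => (hp' (z', y)).symm ▸ rfl
  have hmass2 : ∑ w : ζ' × υ, pZ w.1 * q w.1 w.2 = 1 := by
    rw [Fintype.sum_prod_type]
    have : ∀ z' : ζ', ∑ y, pZ z' * q z' y = pZ z' := by
      intro z'; rw [← Finset.mul_sum, hq1, mul_one]
    simp_rw [this]
    calc ∑ z', pZ z' = ∑ w : ζ' × υ, p' w := (Fintype.sum_prod_type _).symm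
      _ = 1 := hmass1
  rw [hL, hR, hRtrans]
  apply neg_le_neg
  have term : ∀ w : ζ' × υ, p' w * Real.log (q w.1 w.2)
      ≤ p' w * Real.log (p' w / pZ w.1) + (pZ w.1 * q w.1 w.2 - p' w) := by
    intro w
    rcases (hp'0 w).eq_or_lt with hw | hw
    · rw [← hw]
      simp [mul_nonneg (hpZ0 w.1) (hq0 w.1 w.2)]
    · have hq := hqw w hw
      have hpz := hpZpos w hw
      have hx : 0 < pZ w.1 * q w.1 w.2 / p' w := by positivity
      have key := Real.log_le_sub_one_of_pos hx
      have hlog : Real.log (pZ w.1 * q w.1 w.2 / p' w)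
          = Real.log (q w.1 w.2) - Real.log (p' w / pZ w.1) := by
        rw [Real.log_div (by positivity) hw.ne', Real.log_mul hpz.ne' hq.ne',
          Real.log_div hw.ne' hpz.ne']
        ring
      rw [hlog] at key
      have hmul := mul_le_mul_of_nonneg_left key hw.le
      have hcanc : p' w * (pZ w.1 * q w.1 w.2 / p' w - 1)
          = pZ w.1 * q w.1 w.2 - p' w := by
        field_simp
      rw [hcanc] at hmul
      linarith [hmul]
  calc ∑ w : ζ' × υ, p' w * Real.log (q w.1 w.2)
      ≤ ∑ w : ζ' × υ, (p' w * Real.log (p' w / pZ w.1)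
          + (pZ w.1 * q w.1 w.2 - p' w)) :=
        Finset.sum_le_sum fun w _ => term w
    _ = ∑ w : ζ' × υ, p' w * Real.log (p' w / pZ w.1)
          + ((∑ w : ζ' × υ, pZ w.1 * q w.1 w.2) - ∑ w : ζ' × υ, p' w) := by
        rw [Finset.sum_add_distrib, Finset.sum_sub_distrib]
    _ = ∑ w : ζ' × υ, p' w * Real.log (p' w / pZ w.1) := by
        rw [hmass1, hmass2]; ring
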